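/- Let W ~ N(0, σ_W²) and let p ∈ [0,1], k a nonnegative integer. If β is chosen so that P(|W| ≤ β) = 1 − (1−p)^k, then E[W²·1_{|W| > β}] = σ_W²·((1−p)^k + (2/√π)·erfi(1 − (1−p)^k)·e^{−(erfi(1 − (1−p)^k))²}). -/

import Mathlib

open MeasureTheory ProbabilityTheory

/-- The error function erf(x) = (2/√π)·∫₀ˣ e^{−t²} dt. -/
noncomputable def erf (x : ℝ) : ℝ :=
  (2 / Real.sqrt Real.pi) * ∫ t in (0 : ℝ)..x, Real.exp (-t ^ 2)

section Aux

lemma aux_int_exp {v : ℝ} (hv : 0 < v) : Integrable (fun x : ℝ => Real.exp (-x^2/(2*v))) := by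
  refine (integrable_exp_neg_mul_sq (b := (2*v)⁻¹) (by positivity)).congr ?_
  filter_upwards with x
  ring_nf

lemma aux_int_sq_exp {v : ℝ} (hv : 0 < v) :
    Integrable (fun x : ℝ => x^2 * Real.exp (-x^2/(2*v))) := by
  refine (integrable_rpow_mul_exp_neg_mul_sq (b := (2*v)⁻¹) (by positivity) (s := 2)
    (by norm_num)).congr ?_
  filter_upwards with x
  rw [show (2:ℝ) = ((2:ℕ):ℝ) by norm_num, Real.rpow_natCast]
  ring_nf

lemma aux_deriv {v : ℝ} (x : ℝ) (hv : 0 < v) :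
    HasDerivAt (fun x : ℝ => -v * x * Real.exp (-x^2/(2*v)))
      ((x^2 - v) * Real.exp (-x^2/(2*v))) x := by
  have h1 : HasDerivAt (fun x : ℝ => -x^2/(2*v)) (-x/v) x := by
    have : HasDerivAt (fun x : ℝ => -x^2/(2*v)) (-(2*x^1)/(2*v)) x := by
      simpa using ((hasDerivAt_pow 2 x).neg.div_const (2*v))
    convert this using 1
    field_simp
  have h3 := ((hasDerivAt_id x).const_mul (-v)).mul h1.exp
  refine h3.congr_deriv ?_
  simp only [id]
  field_simp
  ring

lemma aux_tendsto {v : ℝ} (hv : 0 < v) :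
    Filter.Tendsto (fun x : ℝ => -v * x * Real.exp (-x^2/(2*v))) Filter.atTop (nhds 0) := by
  have h := rpow_mul_exp_neg_mul_sq_isLittleO_exp_neg (b := (2*v)⁻¹) (by positivity) 1
  have h2 : Filter.Tendsto (fun x : ℝ => x ^ (1:ℝ) * Real.exp (-(2*v)⁻¹ * x ^ 2))
      Filter.atTop (nhds 0) := by
    refine h.isBigO.trans_tendsto ?_
    have hcomp : Filter.Tendsto (fun x : ℝ => (1/2 : ℝ) * x) Filter.atTop Filter.atTop :=
      Filter.Tendsto.const_mul_atTop (by norm_num) Filter.tendsto_id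
    have := Real.tendsto_exp_neg_atTop_nhds_zero.comp hcomp
    refine this.congr fun x => ?_
    simp only [Function.comp]
    norm_num
  have h3 : Filter.Tendsto (fun x : ℝ => -v * (x ^ (1:ℝ) * Real.exp (-(2*v)⁻¹ * x ^ 2)))
      Filter.atTop (nhds (-v * 0)) := h2.const_mul _
  rw [mul_zero] at h3
  refine h3.congr' ?_
  filter_upwards [Filter.eventually_ge_atTop (0:ℝ)] with x hx
  rw [Real.rpow_one]
  ring_nf

lemma aux_tail_Ioi {v : ℝ} (b : ℝ) (hv : 0 < v) :
    ∫ x in Set.Ioi b, x^2 * Real.exp (-x^2/(2*v)) =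
      v * (∫ x in Set.Ioi b, Real.exp (-x^2/(2*v))) + v * b * Real.exp (-b^2/(2*v)) := by
  have key : ∫ x in Set.Ioi b, (x^2 - v) * Real.exp (-x^2/(2*v)) =
      0 - (-v * b * Real.exp (-b^2/(2*v))) := by
    refine integral_Ioi_of_hasDerivAt_of_tendsto ?_ (fun x _ => aux_deriv x hv)
      ?_ (aux_tendsto hv)
    · exact ((aux_deriv b hv).continuousAt).continuousWithinAt
    · exact (((aux_int_sq_exp hv).sub ((aux_int_exp hv).const_mul v)).congr
        (by filter_upwards with x; simp [Pi.sub_apply]; ring)).integrableOn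
  have hsplit : ∫ x in Set.Ioi b, (x^2 - v) * Real.exp (-x^2/(2*v)) =
      (∫ x in Set.Ioi b, x^2 * Real.exp (-x^2/(2*v))) -
        v * ∫ x in Set.Ioi b, Real.exp (-x^2/(2*v)) := by
    rw [← integral_const_mul, ← integral_sub (aux_int_sq_exp hv).integrableOn
      (((aux_int_exp hv).const_mul v).integrableOn)]
    congr 1; ext x; ring
  have key2 : (∫ x in Set.Ioi b, x^2 * Real.exp (-x^2/(2*v))) -
      v * ∫ x in Set.Ioi b, Real.exp (-x^2/(2*v)) = v * b * Real.exp (-b^2/(2*v)) := by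
    rw [← hsplit, key]; ring
  linarith [key2]

lemma erf_strictMono : StrictMono erf := by
  intro a b hab
  have hint : ∀ u w : ℝ, IntervalIntegrable (fun t => Real.exp (-t^2)) volume u w :=
    fun u w => (Continuous.intervalIntegrable (by continuity) u w)
  have hsub : (∫ t in (0:ℝ)..b, Real.exp (-t^2)) - ∫ t in (0:ℝ)..a, Real.exp (-t^2)
      = ∫ t in a..b, Real.exp (-t^2) :=
    intervalIntegral.integral_interval_sub_left (hint 0 b) (hint 0 a)
  have hpos : 0 < ∫ t in a..b, Real.exp (-t^2) :=
    intervalIntegral.intervalIntegral_pos_of_pos (hint a b) (fun x => Real.exp_pos _) hab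
  have h2 : 0 < 2 / Real.sqrt Real.pi := by positivity
  unfold erf
  nlinarith [hsub, hpos, h2]

lemma aux_sym (f : ℝ → ℝ) (hf : ∀ x, f (-x) = f x) (b : ℝ) :
    ∫ x in Set.Iio (-b), f x = ∫ x in Set.Ioi b, f x := by
  rw [setIntegral_congr_set Iio_ae_eq_Iic, ← integral_comp_neg_Ioi]
  simp only [hf]

lemma aux_Icc {v : ℝ} (b : ℝ) (hv : 0 < v) (hb : 0 ≤ b) :
    (Real.sqrt (2*Real.pi*v))⁻¹ * ∫ x in Set.Icc (-b) b, Real.exp (-x^2/(2*v)) =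
      erf (b / Real.sqrt (2*v)) := by
  set s : ℝ := Real.sqrt (2*v) with hs
  have hs0 : 0 < s := Real.sqrt_pos.mpr (by linarith)
  have hs2 : s^2 = 2*v := Real.sq_sqrt (by linarith)
  have hIcc : ∫ x in Set.Icc (-b) b, Real.exp (-x^2/(2*v))
      = ∫ x in (-b)..b, Real.exp (-x^2/(2*v)) := by
    rw [intervalIntegral.integral_of_le (by linarith), integral_Icc_eq_integral_Ioc]
  have hfun : ∀ x : ℝ, Real.exp (-x^2/(2*v)) = Real.exp (-(x/s)^2) := by
    intro x
    congr 1
    rw [div_pow, hs2]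
    ring
  have hsubst : ∫ x in (-b)..b, Real.exp (-x^2/(2*v))
      = s * ∫ u in (-b/s)..(b/s), Real.exp (-u^2) := by
    simp_rw [hfun]
    rw [intervalIntegral.integral_comp_div (fun u => Real.exp (-u^2)) (ne_of_gt hs0)]
    simp [smul_eq_mul]
  have hsplit : ∫ u in (-b/s)..(b/s), Real.exp (-u^2)
      = 2 * ∫ u in (0:ℝ)..(b/s), Real.exp (-u^2) := by
    have hint : ∀ u w : ℝ, IntervalIntegrable (fun t => Real.exp (-t^2)) volume u w :=
      fun u w => (Continuous.intervalIntegrable (by continuity) u w)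
    have hadd := intervalIntegral.integral_add_adjacent_intervals (a := -b/s) (b := 0)
      (c := b/s) (hint _ _) (hint _ _)
    have hneg : ∫ u in (-b/s)..(0:ℝ), Real.exp (-u^2)
        = ∫ u in (0:ℝ)..(b/s), Real.exp (-u^2) := by
      have hcn := intervalIntegral.integral_comp_neg (a := (0:ℝ)) (b := b/s)
        (fun u => Real.exp (-u^2))
      simp only [neg_zero, neg_neg, neg_sq] at hcn
      rw [neg_div, ← hcn]
    rw [← hadd, hneg]
    ring
  have hsqrt : Real.sqrt (2*Real.pi*v) = Real.sqrt Real.pi * s := by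
    rw [hs, ← Real.sqrt_mul Real.pi_pos.le]
    congr 1; ring
  rw [hIcc, hsubst, hsplit, hsqrt, erf]
  have hπ : 0 < Real.sqrt Real.pi := Real.sqrt_pos.mpr Real.pi_pos
  field_simp

lemma aux_pdf (V : NNReal) :
    gaussianPDFReal 0 V = fun x => (Real.sqrt (2*Real.pi*(V:ℝ)))⁻¹ * Real.exp (-x^2/(2*(V:ℝ))) := by
  ext x
  simp [gaussianPDFReal]

lemma aux_toLeb {V : NNReal} (hV : V ≠ 0) (f : ℝ → ℝ) {s : Set ℝ} (hs : MeasurableSet s) :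
    ∫ x in s, f x ∂(gaussianReal 0 V) = ∫ x in s, f x * gaussianPDFReal 0 V x := by
  rw [gaussianReal_of_var_ne_zero 0 hV, restrict_withDensity hs]
  have hdef : gaussianPDF 0 V = fun x => ((Real.toNNReal (gaussianPDFReal 0 V x)) : ENNReal) := rfl
  rw [hdef, integral_withDensity_eq_integral_smul
    ((measurable_gaussianPDFReal 0 V).real_toNNReal) f]
  congr 1
  ext x
  rw [NNReal.smul_def, smul_eq_mul, Real.coe_toNNReal _ (gaussianPDFReal_nonneg 0 V x), mul_comm]

lemma aux_apply {V : NNReal} (hV : V ≠ 0) {s : Set ℝ} (hs : MeasurableSet s) :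
    ((gaussianReal 0 V) s).toReal = ∫ x in s, gaussianPDFReal 0 V x := by
  rw [gaussianReal_apply_eq_integral 0 hV s,
    ENNReal.toReal_ofReal (setIntegral_nonneg hs fun x _ => gaussianPDFReal_nonneg 0 V x)]

end Aux

/-- For W ~ N(0, σ_W²), p ∈ [0,1), k ∈ ℕ, and β chosen so that
P(|W| ≤ β) = 1 − (1−p)^k, we have
E[W²·1_{|W| > β}] = σ_W²·((1−p)^k + (2/√π)·erfi(1−(1−p)^k)·e^{−erfi(1−(1−p)^k)²}). -/
theorem stmt_5 (σW β p : ℝ) (k : ℕ) (hσ : 0 < σW) (hp0 : 0 ≤ p) (hp1 : p < 1)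
    (erfi : ℝ → ℝ)
    (h_inv : ∀ y ∈ Set.Ioo (-1 : ℝ) 1, erf (erfi y) = y)
    (hβ : ((gaussianReal 0 (Real.toNNReal (σW ^ 2))) {x | |x| ≤ β}).toReal
            = 1 - (1 - p) ^ k) :
    (∫ x in {x : ℝ | β < |x|}, x ^ 2 ∂(gaussianReal 0 (Real.toNNReal (σW ^ 2)))) =
      σW ^ 2 * ((1 - p) ^ k + (2 / Real.sqrt Real.pi) * erfi (1 - (1 - p) ^ k) *
        Real.exp (-(erfi (1 - (1 - p) ^ k)) ^ 2)) := by
  set v : ℝ := σW ^ 2 with hvdef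
  set V : NNReal := Real.toNNReal v with hVdef
  have hv : 0 < v := by positivity
  have hVv : (V : ℝ) = v := Real.coe_toNNReal _ hv.le
  have hV : V ≠ 0 := by
    rw [hVdef]
    simp only [ne_eq, Real.toNNReal_eq_zero, not_le]
    exact hv
  set c : ℝ := (Real.sqrt (2*Real.pi*v))⁻¹ with hcdef
  have hpdf : gaussianPDFReal 0 V = fun x => c * Real.exp (-x^2/(2*v)) := by
    rw [aux_pdf, hVv]
  set y : ℝ := 1 - (1 - p) ^ k with hydef
  have hq0 : 0 < (1-p)^k := pow_pos (by linarith) k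
  have hq1 : (1-p)^k ≤ 1 := pow_le_one₀ (by linarith) (by linarith)
  have hy0 : 0 ≤ y := by rw [hydef]; linarith
  have hy1 : y < 1 := by rw [hydef]; linarith
  set b : ℝ := max β 0 with hbdef
  have hb : 0 ≤ b := le_max_right _ _
  set s : ℝ := Real.sqrt (2*v) with hsdef
  have hs0 : 0 < s := Real.sqrt_pos.mpr (by linarith)
  have hs2 : s^2 = 2*v := Real.sq_sqrt (by linarith)
  set t : ℝ := b / s with htdef
  have hπ : 0 < Real.sqrt Real.pi := Real.sqrt_pos.mpr Real.pi_pos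
  have hsqrt : Real.sqrt (2*Real.pi*v) = Real.sqrt Real.pi * s := by
    rw [hsdef, ← Real.sqrt_mul Real.pi_pos.le]
    congr 1; ring
  -- integrability
  have hint_pdf : Integrable (fun x : ℝ => c * Real.exp (-x^2/(2*v))) :=
    (aux_int_exp hv).const_mul c
  have hint_sq_pdf : Integrable (fun x : ℝ => x^2 * (c * Real.exp (-x^2/(2*v)))) := by
    refine ((aux_int_sq_exp hv).const_mul c).congr ?_
    filter_upwards with x; ring
  -- evenness
  have heven_pdf : ∀ x : ℝ, c * Real.exp (-(-x)^2/(2*v)) = c * Real.exp (-x^2/(2*v)) := by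
    intro x; rw [neg_sq]
  have heven_sq : ∀ x : ℝ, (-x)^2 * (c * Real.exp (-(-x)^2/(2*v)))
      = x^2 * (c * Real.exp (-x^2/(2*v))) := by
    intro x; rw [neg_sq]
  -- step 1 : replace β by b in the set
  have hset : (∫ x in {x : ℝ | β < |x|}, x ^ 2 ∂(gaussianReal 0 V))
      = ∫ x in {x : ℝ | b < |x|}, x ^ 2 ∂(gaussianReal 0 V) := by
    rcases le_or_gt 0 β with h | h
    · have : b = β := max_eq_left h
      rw [this]
    · have hb0 : b = 0 := max_eq_right h.le
      have h1 : {x : ℝ | β < |x|} = Set.univ := by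
        ext x
        simp only [Set.mem_setOf_eq, Set.mem_univ, iff_true]
        exact lt_of_lt_of_le h (abs_nonneg x)
      have h2 : {x : ℝ | b < |x|} = ({0}ᶜ : Set ℝ) := by
        ext x
        simp only [hb0, Set.mem_setOf_eq, Set.mem_compl_iff, Set.mem_singleton_iff, abs_pos]
      have h0 : (gaussianReal 0 V) {(0:ℝ)} = 0 :=
        gaussianReal_absolutelyContinuous 0 hV (measure_singleton (0:ℝ))
      rw [h1, h2]
      refine setIntegral_congr_set ?_
      exact (MeasureTheory.ae_eq_univ.mpr (by rwa [compl_compl])).symm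
  -- step 2 : decompose the set
  have hsetdecomp : {x : ℝ | b < |x|} = Set.Iio (-b) ∪ Set.Ioi b := by
    ext x
    simp only [Set.mem_setOf_eq, Set.mem_union, Set.mem_Iio, Set.mem_Ioi, lt_abs]
    constructor
    · rintro (h | h)
      · exact Or.inr h
      · exact Or.inl (by linarith)
    · rintro (h | h)
      · exact Or.inr (by linarith)
      · exact Or.inl h
  have hdisj : Disjoint (Set.Iio (-b)) (Set.Ioi b) := by
    rw [Set.disjoint_left]
    intro x hx hx'
    simp only [Set.mem_Iio] at hx
    simp only [Set.mem_Ioi] at hx'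
    linarith
  -- step 3 : convert to Lebesgue and symmetry
  have key : (∫ x in {x : ℝ | b < |x|}, x ^ 2 ∂(gaussianReal 0 V))
      = 2 * ∫ x in Set.Ioi b, x^2 * (c * Real.exp (-x^2/(2*v))) := by
    rw [hsetdecomp, aux_toLeb hV _ (measurableSet_Iio.union measurableSet_Ioi)]
    simp only [hpdf]
    rw [setIntegral_union hdisj measurableSet_Ioi hint_sq_pdf.integrableOn
      hint_sq_pdf.integrableOn,
      aux_sym (fun x => x^2 * (c * Real.exp (-x^2/(2*v)))) heven_sq b]
    ring
  -- step 4 : tail formula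
  have htail : ∫ x in Set.Ioi b, x^2 * (c * Real.exp (-x^2/(2*v)))
      = v * (∫ x in Set.Ioi b, c * Real.exp (-x^2/(2*v)))
        + v * c * b * Real.exp (-b^2/(2*v)) := by
    have h1 : ∫ x in Set.Ioi b, x^2 * (c * Real.exp (-x^2/(2*v)))
        = c * ∫ x in Set.Ioi b, x^2 * Real.exp (-x^2/(2*v)) := by
      rw [← integral_const_mul]
      congr 1
      ext x
      ring
    have h2 : ∫ x in Set.Ioi b, c * Real.exp (-x^2/(2*v))
        = c * ∫ x in Set.Ioi b, Real.exp (-x^2/(2*v)) := integral_const_mul c _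
    rw [h1, h2, aux_tail_Ioi b hv]
    ring
  -- step 5 : normalization
  have hnorm : (∫ x in Set.Iio (-b), c * Real.exp (-x^2/(2*v)))
      + (∫ x in Set.Icc (-b) b, c * Real.exp (-x^2/(2*v)))
      + (∫ x in Set.Ioi b, c * Real.exp (-x^2/(2*v))) = 1 := by
    have h1 : ∫ x, gaussianPDFReal 0 V x = 1 := integral_gaussianPDFReal_eq_one 0 hV
    rw [hpdf] at h1
    have huniv : (Set.Iio (-b) ∪ Set.Icc (-b) b) ∪ Set.Ioi b = Set.univ := by
      ext x
      simp only [Set.mem_union, Set.mem_Iio, Set.mem_Icc, Set.mem_Ioi, Set.mem_univ, iff_true]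
      rcases lt_or_ge x (-b) with h | h
      · exact Or.inl (Or.inl h)
      · rcases le_or_gt x b with h' | h'
        · exact Or.inl (Or.inr ⟨h, h'⟩)
        · exact Or.inr h'
    have hd1 : Disjoint (Set.Iio (-b)) (Set.Icc (-b) b) := by
      rw [Set.disjoint_left]
      intro x hx hx'
      simp only [Set.mem_Iio] at hx
      simp only [Set.mem_Icc] at hx'
      linarith [hx'.1]
    have hd2 : Disjoint (Set.Iio (-b) ∪ Set.Icc (-b) b) (Set.Ioi b) := by
      rw [Set.disjoint_left]
      intro x hx hx'
      simp only [Set.mem_Ioi] at hx'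
      rcases hx with hx | hx
      · simp only [Set.mem_Iio] at hx; linarith
      · simp only [Set.mem_Icc] at hx; linarith [hx.2]
    have := setIntegral_union hd2 measurableSet_Ioi
      (hint_pdf.integrableOn (s := Set.Iio (-b) ∪ Set.Icc (-b) b))
      (hint_pdf.integrableOn (s := Set.Ioi b))
      (f := fun x => c * Real.exp (-x^2/(2*v))) (μ := volume)
    rw [huniv, setIntegral_univ, h1] at this
    rw [setIntegral_union hd1 measurableSet_Icc hint_pdf.integrableOn
      hint_pdf.integrableOn] at this
    linarith
  have hIm : (∫ x in Set.Iio (-b), c * Real.exp (-x^2/(2*v)))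
      = ∫ x in Set.Ioi b, c * Real.exp (-x^2/(2*v)) :=
    aux_sym _ heven_pdf b
  -- step 6 : the middle integral equals y
  have hyIcc : (∫ x in Set.Icc (-b) b, c * Real.exp (-x^2/(2*v))) = y := by
    rcases le_or_gt 0 β with h | h
    · have hbβ : b = β := max_eq_left h
      have hsetE : {x : ℝ | |x| ≤ β} = Set.Icc (-β) β := by
        ext x
        simp [abs_le]
      have happ := aux_apply hV (s := Set.Icc (-β) β) measurableSet_Icc
      rw [hpdf] at happ
      rw [hbβ, ← happ, ← hsetE, hβ]
    · have hb0 : b = 0 := max_eq_right h.le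
      have hempty : {x : ℝ | |x| ≤ β} = (∅ : Set ℝ) := by
        ext x
        simp only [Set.mem_setOf_eq, Set.mem_empty_iff_false, iff_false, not_le]
        exact lt_of_lt_of_le h (abs_nonneg x)
      have hy0' : y = 0 := by
        rw [← hβ, hempty]
        simp
      rw [hb0, hy0', neg_zero, Set.Icc_self]
      have h00 : (volume : Measure ℝ) {(0:ℝ)} = 0 := measure_singleton (0:ℝ)
      rw [show (volume : Measure ℝ).restrict ({0} : Set ℝ) = 0 from
        Measure.restrict_eq_zero.mpr h00, integral_zero_measure]
  -- step 7 : erf t = y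
  have herf : erf t = y := by
    have h1 := aux_Icc b hv hb
    rw [← hsdef, ← htdef] at h1
    have h2 : (∫ x in Set.Icc (-b) b, c * Real.exp (-x^2/(2*v)))
        = c * ∫ x in Set.Icc (-b) b, Real.exp (-x^2/(2*v)) := integral_const_mul c _
    rw [h2] at hyIcc
    rw [← h1, ← hcdef]
    exact hyIcc
  -- step 8 : erfi y = t
  have ht : erfi y = t := by
    refine erf_strictMono.injective ?_
    rw [h_inv y ⟨by linarith, hy1⟩, herf]
  -- step 9 : combine
  have hI : (∫ x in Set.Ioi b, c * Real.exp (-x^2/(2*v))) = (1 - y) / 2 := by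
    linarith [hnorm, hIm, hyIcc]
  have hE : Real.exp (-t^2) = Real.exp (-b^2/(2*v)) := by
    congr 1
    rw [htdef, div_pow, hs2]
    ring
  have hgoal : (∫ x in {x : ℝ | β < |x|}, x ^ 2 ∂(gaussianReal 0 V))
      = v * (1 - y) + 2 * (v * c * b * Real.exp (-b^2/(2*v))) := by
    rw [hset, key, htail, hI]
    ring
  rw [hgoal, ht, hE]
  have hyk : (1 - p) ^ k = 1 - y := by rw [hydef]; ring
  rw [hyk, hcdef, hsqrt, htdef]
  field_simp
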